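/- Let (X,d) be a compact metric space and f: X → X continuous. For every backward trajectory ⟨x_i⟩_{i≤0} (i.e., f(x_i) = x_{i+1} for all i ≤ -1), the α-limit set α(⟨x_i⟩) is internally chain transitive. -/

import Mathlib

open Filter Metric Topology Set

def omegaSeq {X : Type*} [MetricSpace X] (u : ℕ → X) : Set X :=
  ⋂ M : ℕ, closure (u '' Set.Ioi M)

def omegaPt {X : Type*} [MetricSpace X] (f : X → X) (x : X) : Set X :=
  omegaSeq (fun n => f^[n] x)

def omegaZ {X : Type*} [MetricSpace X] (u : ℤ → X) : Set X :=
  ⋂ M : ℕ, closure (u '' {n : ℤ | (M : ℤ) < n})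

def alphaZ {X : Type*} [MetricSpace X] (u : ℤ → X) : Set X :=
  ⋂ M : ℕ, closure (u '' {n : ℤ | n < -(M : ℤ)})

/-- `A` is internally chain transitive for `f`. -/
def chainTransitive {X : Type*} [MetricSpace X] (f : X → X) (A : Set X) : Prop :=
  ∀ a ∈ A, ∀ b ∈ A, ∀ δ > (0:ℝ), ∃ N : ℕ, 1 ≤ N ∧ ∃ y : ℕ → X,
    y 0 = a ∧ y N = b ∧ (∀ i ≤ N, y i ∈ A) ∧ ∀ i < N, dist (f (y i)) (y (i+1)) < δ

/-- `u` is a full trajectory of `f`. -/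
def fullTraj {X : Type*} (f : X → X) (u : ℤ → X) : Prop := ∀ i : ℤ, f (u i) = u (i + 1)

/-- `u` is a two-sided asymptotic pseudo-orbit of `f`. -/
def twoSidedAsymptotic {X : Type*} [MetricSpace X] (f : X → X) (u : ℤ → X) : Prop :=
  Filter.Tendsto (fun i : ℤ => dist (f (u i)) (u (i + 1))) Filter.atTop (nhds 0) ∧
  Filter.Tendsto (fun i : ℤ => dist (f (u i)) (u (i + 1))) Filter.atBot (nhds 0)

/-- The γ-limit set of a point. -/
def gammaLimit {X : Type*} [MetricSpace X] (f : X → X) (x : X) : Set X :=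
  {y | y ∈ omegaPt f x ∧ ∃ (ys : ℕ → X) (ns : ℕ → ℕ), StrictMono ns ∧
    (∀ i, f^[ns i] (ys i) = x) ∧ Filter.Tendsto ys Filter.atTop (nhds y)}

lemma alpha_proj {X : Type*} [MetricSpace X] [CompactSpace X] (u : ℤ → X)
    (ε : ℝ) (hε : 0 < ε) :
    ∃ M : ℕ, ∀ n : ℤ, n < -(M:ℤ) → ∃ p ∈ alphaZ u, dist (u n) p < ε := by
  by_contra h
  push_neg at h
  choose n hn hfar using h
  obtain ⟨z, -, φ, hφ, hz⟩ := isCompact_univ.tendsto_subseq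
    (fun M => Set.mem_univ (u (n M)))
  have hzA : z ∈ alphaZ u := by
    rw [alphaZ, Set.mem_iInter]
    intro K
    apply mem_closure_of_tendsto hz
    filter_upwards [eventually_ge_atTop K] with j hj
    refine ⟨n (φ j), ?_, rfl⟩
    have h1 : (K : ℤ) ≤ (φ j : ℤ) := by exact_mod_cast hj.trans hφ.le_apply
    have := hn (φ j)
    simp only [Set.mem_setOf_eq]
    omega
  have hev := hz.eventually (Metric.ball_mem_nhds z hε)
  obtain ⟨j, hj⟩ := hev.exists
  exact absurd (Metric.mem_ball.mp hj) (not_lt.mpr (dist_comm z _ ▸ hfar (φ j) z hzA))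

lemma alpha_mem_near {X : Type*} [MetricSpace X] (u : ℤ → X) {a : X}
    (ha : a ∈ alphaZ u) (K : ℤ) (ε : ℝ) (hε : 0 < ε) :
    ∃ m : ℤ, m < K ∧ dist (u m) a < ε := by
  have h1 : a ∈ closure (u '' {n : ℤ | n < -(((-K).toNat : ℕ) : ℤ)}) :=
    Set.mem_iInter.mp ha (-K).toNat
  obtain ⟨b, ⟨m, hm, rfl⟩, hd⟩ := Metric.mem_closure_iff.mp h1 ε hε
  refine ⟨m, ?_, by rwa [dist_comm]⟩
  have : -K ≤ ((-K).toNat : ℤ) := Int.self_le_toNat _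
  simp only [Set.mem_setOf_eq] at hm
  omega

theorem stmt3 {X : Type*} [MetricSpace X] [CompactSpace X] (f : X → X)
    (hf : Continuous f) (u : ℤ → X) (hu : ∀ i ≤ (-1 : ℤ), f (u i) = u (i + 1)) :
    chainTransitive f (alphaZ u) := by

  intro a ha b hb δ hδ
  -- uniform continuity
  have huc : UniformContinuous f := CompactSpace.uniformContinuous_of_continuous hf
  obtain ⟨ε0, hε0, hucd⟩ := Metric.uniformContinuous_iff.mp huc (δ/3) (by linarith)
  set ε : ℝ := min ε0 (δ/3) with hεdef
  have hε : 0 < ε := lt_min hε0 (by linarith)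
  obtain ⟨M0, hM0⟩ := alpha_proj u ε hε
  -- pick m close to b, with m < -M0 - 1
  obtain ⟨m, hm, hmb⟩ := alpha_mem_near u hb (-(M0:ℤ) - 1) ε hε
  -- pick k close to a, with k < m
  obtain ⟨k, hk, hka⟩ := alpha_mem_near u ha m ε hε
  set N : ℕ := (m - k).toNat with hNdef
  have hN1 : 1 ≤ N := by omega
  have hkN : k + (N : ℤ) = m := by omega
  classical
  set c : ℤ → X := fun n => if h : ∃ p ∈ alphaZ u, dist (u n) p < ε then h.choose else a
    with hcdef
  have hc : ∀ n : ℤ, n < -(M0:ℤ) → c n ∈ alphaZ u ∧ dist (u n) (c n) < ε := by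
    intro n hn
    have h := hM0 n hn
    simp only [hcdef, dif_pos h]
    exact ⟨h.choose_spec.1, h.choose_spec.2⟩
  set y : ℕ → X := fun i => if i = 0 then a else if N ≤ i then b else c (k + i) with hydef
  refine ⟨N, hN1, y, by simp [hydef], by simp only [hydef]; rw [if_neg (by omega : ¬ N = 0), if_pos le_rfl], ?_, ?_⟩
  · intro i hi
    by_cases h0 : i = 0
    · simpa [hydef, h0] using ha
    by_cases hN : N ≤ i
    · simpa [hydef, h0, hN] using hb
    · have hlt : k + (i : ℤ) < -(M0:ℤ) := by omega
      simpa [hydef, h0, hN] using (hc _ hlt).1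
  · -- chain condition
    have hclose : ∀ i : ℕ, i ≤ N → dist (y i) (u (k + i)) < ε := by
      intro i hi
      by_cases h0 : i = 0
      · subst h0; simpa [hydef, dist_comm] using hka
      by_cases hN : N ≤ i
      · have : i = N := le_antisymm hi hN
        subst this
        simp only [hydef, h0, if_neg h0, if_pos hN, hkN]
        rw [dist_comm]; exact hmb
      · have hlt : k + (i : ℤ) < -(M0:ℤ) := by omega
        simp only [hydef, if_neg h0, if_neg hN]
        rw [dist_comm]; exact (hc _ hlt).2
    intro i hi
    have h1 : dist (y i) (u (k + i)) < ε := hclose i hi.le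
    have h2 : dist (y (i+1)) (u (k + (i+1))) < ε := hclose (i+1) hi
    have hfu : f (u (k + i)) = u (k + i + 1) := by
      apply hu; omega
    have h3 : dist (f (y i)) (f (u (k + i))) < δ/3 :=
      hucd (lt_of_lt_of_le h1 (min_le_left _ _))
    have h4 : dist (u (k + (i+1))) (y (i+1)) < δ/3 := by
      rw [dist_comm]; exact lt_of_lt_of_le h2 (min_le_right _ _)
    calc dist (f (y i)) (y (i+1))
        ≤ dist (f (y i)) (f (u (k + i))) + dist (f (u (k + i))) (y (i+1)) := dist_triangle _ _ _
      _ < δ/3 + δ/3 := by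
          apply add_lt_add h3
          rw [hfu]
          convert h4 using 2
          · rfl
          · rw [add_assoc]
      _ < δ := by linarith
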